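/- Let G be a connected graph, c a proper χ-coloring of G, and X a nonempty subset of V(G). Then there exists a proper χ-coloring c' of G that agrees with c on X such that every vertex of G is the beginning of a directed path in D_{c'} ending in X (possibly of length 0). -/

import Mathlib

section Aux

variable {V : Type}

/-- Reachability to `X` along a `+1`-directed path. -/
def Rch (G : SimpleGraph V) (X : Set V) {χ : ℕ} (c' : V → ZMod χ) (v : V) : Prop :=
  ∃ l : List V, l ≠ [] ∧
    l.Chain' (fun a b => G.Adj a b ∧ c' b = c' a + 1) ∧
    l.head? = some v ∧ ∃ t ∈ X, l.getLast? = some t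

lemma rch_of_mem (G : SimpleGraph V) (X : Set V) {χ : ℕ} (c' : V → ZMod χ) {x : V}
    (hx : x ∈ X) : Rch G X c' x :=
  ⟨[x], by simp, List.isChain_singleton _, by simp, x, hx, by simp⟩

lemma rch_cons (G : SimpleGraph V) (X : Set V) {χ : ℕ} (c' : V → ZMod χ) {v w : V}
    (hadj : G.Adj v w) (hcol : c' w = c' v + 1) (hw : Rch G X c' w) : Rch G X c' v := by
  obtain ⟨l, hne, hch, hhd, t, htX, hlast⟩ := hw
  cases l with
  | nil => exact absurd rfl hne
  | cons w' rest =>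
    have hw' : w' = w := by simpa using hhd
    exact ⟨v :: w' :: rest, by simp,
      List.isChain_cons_cons.mpr ⟨⟨hw' ▸ hadj, hw' ▸ hcol⟩, hch⟩, by simp,
      t, htX, by simpa [List.getLast?_cons_cons] using hlast⟩

lemma rch_all (G : SimpleGraph V) (X : Set V) {χ : ℕ} (c' : V → ZMod χ) :
    ∀ l : List V, l.Chain' (fun a b => G.Adj a b ∧ c' b = c' a + 1) →
      (∃ t ∈ X, l.getLast? = some t) → ∀ v ∈ l, Rch G X c' v := by
  intro l
  induction l with
  | nil => simp
  | cons a l ih =>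
    intro hch hlast v hv
    rcases List.mem_cons.mp hv with hva | hv
    · exact hva ▸ ⟨a :: l, by simp, hch, by simp, hlast⟩
    · have hlne : l ≠ [] := List.ne_nil_of_mem hv
      cases l with
      | nil => exact absurd rfl hlne
      | cons b l' =>
        exact ih (List.isChain_cons_cons.mp hch).2
          (by simpa [List.getLast?_cons_cons] using hlast) v hv

lemma chain_transfer (G : SimpleGraph V) {χ : ℕ} (c' c₁ : V → ZMod χ) :
    ∀ l : List V, (∀ a ∈ l, c₁ a = c' a) →
      l.Chain' (fun a b => G.Adj a b ∧ c' b = c' a + 1) →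
      l.Chain' (fun a b => G.Adj a b ∧ c₁ b = c₁ a + 1) := by
  intro l
  induction l with
  | nil => intro _ _; exact List.isChain_nil
  | cons a l ih =>
    intro hag hch
    match l with
    | [] => exact List.isChain_singleton _
    | b :: l' =>
      simp only [List.Chain', List.isChain_cons_cons] at hch ⊢
      refine ⟨⟨hch.1.1, ?_⟩, ih (fun x hx => hag x (List.mem_cons_of_mem _ hx)) hch.2⟩
      rw [hag a (by simp), hag b (by simp), hch.1.2]

lemma rch_congr (G : SimpleGraph V) (X : Set V) {χ : ℕ} {c' c₁ : V → ZMod χ}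
    (hag : ∀ v, Rch G X c' v → c₁ v = c' v) {v : V} (hv : Rch G X c' v) :
    Rch G X c₁ v := by
  obtain ⟨l, hne, hch, hhd, hlast⟩ := hv
  exact ⟨l, hne,
    chain_transfer G c' c₁ l (fun a ha => hag a (rch_all G X c' l hch hlast a ha)) hch,
    hhd, hlast⟩

lemma cross (G : SimpleGraph V) (Q : V → Prop) :
    ∀ {a b : V}, G.Walk a b → Q a → ¬ Q b →
      ∃ u w, G.Adj u w ∧ Q u ∧ ¬ Q w := by
  classical
  intro a b p
  induction p with
  | nil => intro h h'; exact absurd h h'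
  | cons h p ih =>
    rename_i a' b' c'
    intro ha hb
    by_cases hm : Q b'
    · exact ih hm hb
    · exact ⟨_, _, h, ha, hm⟩

lemma exists_good {χ : ℕ} (D : Set (ZMod χ)) (hfin : D.Finite) (hne : D.Nonempty)
    (h1 : (1 : ZMod χ) ∉ D) : ∃ d ∈ D, d - 1 ∉ D := by
  by_contra hcon
  push_neg at hcon
  obtain ⟨d0, hd0⟩ := hne
  have key : ∀ n : ℕ, d0 - (n : ZMod χ) ∈ D := by
    intro n
    induction n with
    | zero => simpa using hd0
    | succ n ih =>
      have h := hcon _ ih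
      have he : d0 - ((n + 1 : ℕ) : ZMod χ) = d0 - (n : ZMod χ) - 1 := by push_cast; ring
      rwa [he]
  rcases Nat.eq_zero_or_pos χ with hχ | hχ
  · subst hχ
    refine hfin.not_infinite
      (Set.infinite_of_injective_forall_mem
        (f := fun n : ℕ => d0 - (n : ZMod 0)) ?_ key)
    intro a b hab
    simp only at hab
    have h2 : ((a : ℕ) : ZMod 0) = ((b : ℕ) : ZMod 0) := by
      have := sub_right_injective hab
      exact this
    exact Nat.cast_injective h2
  · haveI : NeZero χ := ⟨hχ.ne'⟩
    have h := key (d0 - 1).val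
    rw [ZMod.natCast_rightInverse (d0 - 1), sub_sub_cancel] at h
    exact h1 h

lemma step [Fintype V] (G : SimpleGraph V) (hG : G.Connected) (X : Set V)
    (hXne : X.Nonempty) {χ : ℕ} (c' : V → ZMod χ)
    (hp : ∀ u w, G.Adj u w → c' u ≠ c' w) {v0 : V} (hv0 : ¬ Rch G X c' v0) :
    ∃ (c₁ : V → ZMod χ) (u : V), (∀ a b, G.Adj a b → c₁ a ≠ c₁ b) ∧
      (∀ v, Rch G X c' v → c₁ v = c' v) ∧ ¬ Rch G X c' u ∧ Rch G X c₁ u := by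
  classical
  obtain ⟨x, hx⟩ := hXne
  have hxr : Rch G X c' x := rch_of_mem G X c' hx
  obtain ⟨p⟩ := hG.preconnected v0 x
  obtain ⟨u, w, hadj, hu, hw⟩ := cross G (fun v => ¬ Rch G X c' v) p hv0 (not_not_intro hxr)
  rw [not_not] at hw
  set D : Set (ZMod χ) :=
    {d | ∃ a b : V, ¬ Rch G X c' a ∧ Rch G X c' b ∧ G.Adj a b ∧ c' b - c' a = d} with hDdef
  have hDfin : D.Finite := by
    apply Set.Finite.subset (Set.finite_range fun p : V × V => c' p.2 - c' p.1)
    rintro d ⟨a, b, -, -, -, h⟩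
    exact ⟨(a, b), h⟩
  have hDne : D.Nonempty := ⟨c' w - c' u, u, w, hu, hw, hadj, rfl⟩
  have h1D : (1 : ZMod χ) ∉ D := by
    rintro ⟨a, b, ha, hb, hab, h1⟩
    refine ha (rch_cons G X c' hab ?_ hb)
    rw [sub_eq_iff_eq_add] at h1
    rw [h1, add_comm]
  obtain ⟨d, hdD, hd1⟩ := exists_good D hDfin hDne h1D
  obtain ⟨a0, b0, ha0, hb0, hab0, hd0⟩ := hdD
  set c₁ : V → ZMod χ := fun v => if Rch G X c' v then c' v else c' v + (d - 1) with hc₁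
  have hag : ∀ v, Rch G X c' v → c₁ v = c' v := fun v hv => if_pos hv
  have hproper : ∀ a b, G.Adj a b → c₁ a ≠ c₁ b := by
    intro a b hab
    by_cases ha : Rch G X c' a <;> by_cases hb : Rch G X c' b
    · simp only [hc₁, if_pos ha, if_pos hb]
      exact hp a b hab
    · simp only [hc₁, if_pos ha, if_neg hb]
      intro h
      exact hd1 ⟨b, a, hb, ha, hab.symm, by rw [h]; ring⟩
    · simp only [hc₁, if_neg ha, if_pos hb]
      intro h
      exact hd1 ⟨a, b, ha, hb, hab, by rw [← h]; ring⟩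
    · simp only [hc₁, if_neg ha, if_neg hb]
      intro h
      exact hp a b hab (add_right_cancel h)
  have hcol : c₁ b0 = c₁ a0 + 1 := by
    simp only [hc₁, if_pos hb0, if_neg ha0]
    rw [← hd0]; ring
  exact ⟨c₁, a0, hproper, hag, ha0,
    rch_cons G X c₁ hab0 hcol (rch_congr G X hag hb0)⟩

lemma main_lemma [Fintype V] (G : SimpleGraph V) (hG : G.Connected) (X : Set V)
    (hXne : X.Nonempty) (χ : ℕ) :
    ∀ n (c' : V → ZMod χ), (∀ u w, G.Adj u w → c' u ≠ c' w) →
      {v | ¬ Rch G X c' v}.ncard ≤ n →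
      ∃ c'' : V → ZMod χ, (∀ u w, G.Adj u w → c'' u ≠ c'' w) ∧
        (∀ v, Rch G X c' v → c'' v = c' v) ∧ ∀ v, Rch G X c'' v := by
  classical
  intro n
  induction n with
  | zero =>
    intro c' hp hcard
    refine ⟨c', hp, fun _ _ => rfl, fun v => ?_⟩
    by_contra hv
    have h0 : {v | ¬ Rch G X c' v}.ncard = 0 := Nat.le_zero.mp hcard
    have := (Set.ncard_eq_zero (Set.toFinite _)).mp h0
    exact absurd (this ▸ hv : v ∈ (∅ : Set V)) (Set.notMem_empty v)
  | succ n ih =>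
    intro c' hp hcard
    by_cases hall : ∀ v, Rch G X c' v
    · exact ⟨c', hp, fun _ _ => rfl, hall⟩
    · push_neg at hall
      obtain ⟨v0, hv0⟩ := hall
      obtain ⟨c₁, u, hp1, hag1, hu, hu1⟩ := step G hG X hXne c' hp hv0
      have hsub : {v | ¬ Rch G X c₁ v} ⊆ {v | ¬ Rch G X c' v} \ {u} := by
        intro v hv
        refine ⟨fun hv' => hv (rch_congr G X hag1 hv'), fun hvu => ?_⟩
        rw [Set.mem_singleton_iff] at hvu
        exact hv (hvu ▸ hu1)
      have hlt : {v | ¬ Rch G X c₁ v}.ncard ≤ n := by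
        have h1 : {v | ¬ Rch G X c₁ v}.ncard ≤ ({v | ¬ Rch G X c' v} \ {u}).ncard :=
          Set.ncard_le_ncard hsub (Set.toFinite _)
        have h2 : ({v | ¬ Rch G X c' v} \ {u}).ncard < {v | ¬ Rch G X c' v}.ncard :=
          Set.ncard_diff_singleton_lt_of_mem hu (Set.toFinite _)
        omega
      obtain ⟨c'', hp2, hag2, hall2⟩ := ih c₁ hp1 hlt
      refine ⟨c'', hp2, fun v hv => ?_, hall2⟩
      rw [hag2 v (rch_congr G X hag1 hv), hag1 v hv]

end Aux

/-- For any subset `X`, there is a proper coloring agreeing with `c` on `X`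
such that every vertex begins a directed path of `D_{c'}` ending in `X`. -/
theorem reachable_set {V : Type} [Fintype V] (G : SimpleGraph V) (hG : G.Connected)
    (χ : ℕ) (c : V → ZMod χ) (hc : ∀ u w, G.Adj u w → c u ≠ c w)
    (X : Set V) (hXne : X.Nonempty) :
    ∃ c' : V → ZMod χ,
      (∀ u w, G.Adj u w → c' u ≠ c' w) ∧
      (∀ x ∈ X, c' x = c x) ∧
      ∀ v : V, ∃ l : List V, l ≠ [] ∧
        l.Chain' (fun a b => G.Adj a b ∧ c' b = c' a + 1) ∧
        l.head? = some v ∧ ∃ t ∈ X, l.getLast? = some t := by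
  obtain ⟨c', hp, hag, hall⟩ :=
    main_lemma G hG X hXne χ ({v | ¬ Rch G X c v}.ncard) c hc le_rfl
  exact ⟨c', hp, fun x hx => hag x (rch_of_mem G X c hx), fun v => hall v⟩
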